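/- If P is a uniquely generated finite poset on n elements, then the chromatic number of its cover graph is at most ⌊log₂ n⌋ + 1. -/

import Mathlib

def coverGraph (α : Type*) [PartialOrder α] : SimpleGraph α :=
  SimpleGraph.fromRel (· ⋖ ·)

def UniquelyGenerated (α : Type*) [PartialOrder α] : Prop :=
  ∀ x y : α, x < y →
    ∃! l : List α, List.Chain (· ⋖ ·) x l ∧ l.getLast? = some y

section aux
variable {α : Type*} [Fintype α] [PartialOrder α]

lemma chain_snoc : ∀ (l : List α) (z w y : α), List.Chain (· ⋖ ·) z l →
    l.getLast? = some w → w ⋖ y → List.Chain (· ⋖ ·) z (l ++ [y]) := by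
  intro l
  induction l with
  | nil => intro z w y _ hl; simp at hl
  | cons b t iht =>
    intro z w y hc hl hwy
    rw [List.Chain, List.chain_cons] at hc
    rw [List.cons_append, List.Chain, List.chain_cons]
    rcases t with _ | ⟨c, t'⟩
    · simp only [List.getLast?_singleton, Option.some_inj] at hl
      subst hl
      exact ⟨hc.1, by simpa using hwy⟩
    · exact ⟨hc.1, iht b w y hc.2 (by simpa using hl) hwy⟩

lemma mem_of_getLast?' : ∀ (l : List α) (w : α), l.getLast? = some w → w ∈ l := by
  intro l
  induction l with
  | nil => intro w hl; simp at hl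
  | cons b t iht =>
    intro w hl
    rcases t with _ | ⟨c, t'⟩
    · simp only [List.getLast?_singleton, Option.some_inj] at hl
      simp [hl]
    · exact List.mem_cons_of_mem _ (iht w (by simpa using hl))

open Classical in
noncomputable def dset (x : α) : Finset α := Finset.univ.filter (· ≤ x)

lemma mem_dset {x z : α} : z ∈ dset x ↔ z ≤ x := by simp [dset]

lemma exists_cov_chain : ∀ y z : α, z < y →
    ∃ l : List α, List.Chain (· ⋖ ·) z l ∧ l.getLast? = some y ∧ ∀ a ∈ l, a ≤ y := by
  intro y
  induction y using WellFoundedLT.induction with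
  | _ y ih =>
    intro z hzy
    classical
    obtain ⟨w, hw, hwmax⟩ := Finset.exists_maximal
      (s := Finset.univ.filter (fun t => z ≤ t ∧ t < y)) ⟨z, by simp [hzy]⟩
    simp only [Finset.mem_filter, Finset.mem_univ, true_and] at hw
    have hcov : w ⋖ y := by
      refine ⟨hw.2, fun c hc1 hc2 => ?_⟩
      exact absurd (hwmax (by simp [le_trans hw.1 hc1.le, hc2]) hc1.le) (not_le_of_gt hc1)
    rcases eq_or_lt_of_le hw.1 with rfl | hzw
    · exact ⟨[y], by simpa [List.Chain] using hcov, by simp, by simp⟩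
    · obtain ⟨l, hl1, hl2, hl3⟩ := ih w hw.2 z hzw
      refine ⟨l ++ [y], chain_snoc l z w y hl1 hl2 hcov, by simp, ?_⟩
      intro a ha
      rcases List.mem_append.mp ha with ha | ha
      · exact le_trans (hl3 a ha) hcov.le
      · simp only [List.mem_singleton] at ha; subst ha; exact le_rfl

lemma downsets_disjoint (h : UniquelyGenerated α) {x w₁ w₂ : α}
    (h1 : w₁ ⋖ x) (h2 : w₂ ⋖ x) (hne : w₁ ≠ w₂) {z : α}
    (hz1 : z ≤ w₁) (hz2 : z ≤ w₂) : False := by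
  have key : ∀ a b : α, a ⋖ x → b ⋖ x → a ≠ b → ¬ a ≤ b := by
    intro a b ha hb hab hle
    rcases lt_or_eq_of_le hle with hlt | rfl
    · exact ha.2 hlt hb.1
    · exact hab rfl
  rcases eq_or_lt_of_le hz1 with rfl | hzw1
  · exact key z w₂ h1 h2 hne hz2
  rcases eq_or_lt_of_le hz2 with rfl | hzw2
  · exact key z w₁ h2 h1 (Ne.symm hne) hz1
  obtain ⟨l₁, hc₁, hlast₁, hmem₁⟩ := exists_cov_chain w₁ z hzw1
  obtain ⟨l₂, hc₂, hlast₂, hmem₂⟩ := exists_cov_chain w₂ z hzw2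
  have hx1 : List.Chain (· ⋖ ·) z (l₁ ++ [x]) ∧ (l₁ ++ [x]).getLast? = some x :=
    ⟨chain_snoc l₁ z w₁ x hc₁ hlast₁ h1, by simp⟩
  have hx2 : List.Chain (· ⋖ ·) z (l₂ ++ [x]) ∧ (l₂ ++ [x]).getLast? = some x :=
    ⟨chain_snoc l₂ z w₂ x hc₂ hlast₂ h2, by simp⟩
  have heq : l₁ ++ [x] = l₂ ++ [x] :=
    ExistsUnique.unique (h z x (lt_trans hzw1 h1.lt)) hx1 hx2
  have hw1mem : w₁ ∈ l₁ ++ [x] :=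
    List.mem_append.mpr (Or.inl (mem_of_getLast?' l₁ w₁ hlast₁))
  have hw1nmem : w₁ ∉ l₂ ++ [x] := by
    intro hmem
    rcases List.mem_append.mp hmem with hm | hm
    · exact key w₁ w₂ h1 h2 hne (hmem₂ _ hm)
    · simp only [List.mem_singleton] at hm
      exact absurd hm (ne_of_lt h1.lt)
  rw [heq] at hw1mem
  exact hw1nmem hw1mem

noncomputable def gr : α → ℕ :=
  WellFounded.fix (wellFounded_lt)
    (fun x rec => sInf {n | ∀ (w) (hw : w ⋖ x), rec w hw.lt ≠ n})

lemma gr_eq (x : α) : gr x = sInf {n | ∀ (w) (_ : w ⋖ x), gr w ≠ n} := by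
  rw [gr, WellFounded.fix_eq]

lemma gr_set_nonempty (x : α) : {n | ∀ (w) (_ : w ⋖ x), gr w ≠ n}.Nonempty := by
  classical
  refine ⟨(Finset.univ.image (gr (α := α))).sup id + 1, fun w _ => ?_⟩
  have : gr w ≤ (Finset.univ.image (gr (α := α))).sup id :=
    Finset.le_sup (f := id) (Finset.mem_image_of_mem _ (Finset.mem_univ w))
  omega

lemma gr_ne (x w : α) (hw : w ⋖ x) : gr w ≠ gr x := by
  have := Nat.sInf_mem (gr_set_nonempty x)
  rw [← gr_eq] at this
  exact this w hw

lemma sum_two_pow (k : ℕ) : (∑ i ∈ Finset.range k, 2 ^ i) + 1 = 2 ^ k := by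
  induction k with
  | zero => simp
  | succ k ih => rw [Finset.sum_range_succ, pow_succ]; omega

lemma pow_gr_le (h : UniquelyGenerated α) : ∀ x : α, 2 ^ gr x ≤ (dset x).card := by
  intro x
  induction x using WellFoundedLT.induction with
  | _ x ih =>
    classical
    set k := gr x with hk
    have hex : ∀ i : ℕ, ∃ w : α, i < k → (w ⋖ x ∧ gr w = i) := by
      intro i
      by_cases hi : i < k
      · have hmem : i ∉ {n | ∀ (w) (_ : w ⋖ x), gr w ≠ n} := by
          apply Nat.notMem_of_lt_sInf
          rw [← gr_eq]
          exact hi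
        rw [Set.mem_setOf_eq] at hmem
        push_neg at hmem
        obtain ⟨w, hw, hgw⟩ := hmem
        exact ⟨w, fun _ => ⟨hw, hgw⟩⟩
      · exact ⟨x, fun h' => absurd h' hi⟩
    choose f hf using hex
    have hdisj : ∀ i ∈ Finset.range k, ∀ j ∈ Finset.range k, i ≠ j →
        Disjoint (dset (f i)) (dset (f j)) := by
      intro i hi j hj hij
      rw [Finset.mem_range] at hi hj
      rw [Finset.disjoint_left]
      intro z hz1 hz2
      refine downsets_disjoint h (hf i hi).1 (hf j hj).1 ?_ (mem_dset.mp hz1) (mem_dset.mp hz2)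
      intro hfij
      apply hij
      rw [← (hf i hi).2, ← (hf j hj).2, hfij]
    have hsub : (Finset.range k).biUnion (fun i => dset (f i)) ⊆ (dset x).erase x := by
      intro z hz
      simp only [Finset.mem_biUnion, Finset.mem_range] at hz
      obtain ⟨i, hi, hz⟩ := hz
      have hzlt : z < x := lt_of_le_of_lt (mem_dset.mp hz) (hf i hi).1.lt
      exact Finset.mem_erase.mpr ⟨ne_of_lt hzlt, mem_dset.mpr hzlt.le⟩
    have hcard : ∑ i ∈ Finset.range k, (dset (f i)).card ≤ (dset x).card - 1 := by
      rw [← Finset.card_biUnion hdisj]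
      calc ((Finset.range k).biUnion (fun i => dset (f i))).card
          ≤ ((dset x).erase x).card := Finset.card_le_card hsub
        _ = (dset x).card - 1 := Finset.card_erase_of_mem (mem_dset.mpr le_rfl)
    have hsum : (∑ i ∈ Finset.range k, 2 ^ i) ≤ ∑ i ∈ Finset.range k, (dset (f i)).card := by
      apply Finset.sum_le_sum
      intro i hi
      rw [Finset.mem_range] at hi
      have := ih (f i) (hf i hi).1.lt
      rw [(hf i hi).2] at this
      exact this
    have hpos : 1 ≤ (dset x).card := Finset.card_pos.mpr ⟨x, mem_dset.mpr le_rfl⟩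
    have := sum_two_pow k
    omega

lemma gr_lt (h : UniquelyGenerated α) (x : α) :
    gr x < Nat.log 2 (Fintype.card α) + 1 := by
  have h1 : 2 ^ gr x ≤ Fintype.card α :=
    le_trans (pow_gr_le h x) (Finset.card_le_univ _)
  have : Nonempty α := ⟨x⟩
  have h2 : gr x ≤ Nat.log 2 (Fintype.card α) :=
    (Nat.le_log_iff_pow_le (by norm_num) Fintype.card_ne_zero).mpr h1
  omega

end aux

theorem stmt0 (α : Type*) [Fintype α] [PartialOrder α]
    (h : UniquelyGenerated α) :
    (coverGraph α).chromaticNumber ≤ Nat.log 2 (Fintype.card α) + 1 := by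
  have C : (coverGraph α).Coloring (Fin (Nat.log 2 (Fintype.card α) + 1)) := by
    refine SimpleGraph.Coloring.mk (fun x => ⟨gr x, gr_lt h x⟩) ?_
    intro a b hab hfe
    rw [coverGraph, SimpleGraph.fromRel_adj] at hab
    have hg : gr a = gr b := congrArg Fin.val hfe
    rcases hab.2 with hc | hc
    · exact gr_ne b a hc hg
    · exact gr_ne a b hc hg.symm
  have := C.colorable.chromaticNumber_le
  simpa using this
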